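/- Let S be a subset of the cycle vertices of the blow-up graph with fasteners containing the same community as v₁ and v₂. Then |E₀↑| + 2|F \ S| ≥ 2a(στ − |S|), where E₀↑ is the set of cycle edges with exactly one endpoint in S and F is the set of fastener vertices. -/

import Mathlib

set_option maxHeartbeats 1600000


/-- In the τ-blow-up of `C_σ` (layers `L_ω = {ω} × Fin τ`, consecutive layers fully
joined), with fastener set `F` spread so that layer `ω` (0-indexed) contains exactly
`⌊a(ω+1)τ⌋ − ⌊aωτ⌋` fastener vertices, and `S` the set of cycle vertices in the
distinguished community of `v₁, v₂`, the number `|E₀↑|` of cycle edges with exactly one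
endpoint in `S` (counted as ordered pairs `(p₁,p₂)` with `p₁ ∈ S`, `p₂ ∉ S`, which counts
each such edge once) satisfies `|E₀↑| + 2|F \ S| ≥ 2a(στ − |S|)`. -/
theorem stmt_5 (τ σ : ℕ) [NeZero σ] (a : ℚ) (hτ : 1 ≤ τ)
    (ha0 : 0 < a) (ha1 : a < 1) (hσ3 : 3 ≤ σ) (hσa : 2 / a ≤ (σ : ℚ))
    (m : ℤ) (heven : a * σ * τ = 2 * (m : ℚ))
    (F : Finset (ZMod σ × Fin τ)) (hFcard : (F.card : ℚ) = a * σ * τ)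
    (hlayer : ∀ ω : Fin σ, ((F.filter (fun v => v.1 = (ω : ZMod σ))).card : ℤ)
        = ⌊a * ((ω : ℚ) + 1) * τ⌋ - ⌊a * (ω : ℚ) * τ⌋)
    (S : Finset (ZMod σ × Fin τ)) :
    2 * a * ((σ * τ : ℚ) - S.card) ≤
      ((Finset.univ.filter (fun p : (ZMod σ × Fin τ) × (ZMod σ × Fin τ) =>
        (p.2.1 = p.1.1 + 1 ∨ p.1.1 = p.2.1 + 1) ∧ p.1 ∈ S ∧ p.2 ∉ S)).card : ℚ)
      + 2 * ((F \ S).card : ℚ) := by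
  have hσ1 : Fact (1 < σ) := ⟨by omega⟩
  -- layer-wise counts
  let s : ZMod σ → ℕ := fun ω => (S.filter (fun v => v.1 = ω)).card
  let c : ZMod σ → ℕ := fun ω => ((Finset.univ \ S).filter (fun v => v.1 = ω)).card
  let φ : ZMod σ → ℕ := fun ω => (F.filter (fun v => v.1 = ω)).card
  let g : ZMod σ → ℚ := fun z => Int.fract (a * z.val * τ)
  have hsdef : ∀ ω, s ω = (S.filter (fun v => v.1 = ω)).card := fun _ => rfl
  have hcdef : ∀ ω, c ω = ((Finset.univ \ S).filter (fun v => v.1 = ω)).card := fun _ => rfl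
  have hφdef : ∀ ω, φ ω = (F.filter (fun v => v.1 = ω)).card := fun _ => rfl
  have hgdef : ∀ z, g z = Int.fract (a * z.val * τ) := fun _ => rfl
  -- each layer has τ vertices
  have hlayercard : ∀ ω : ZMod σ,
      (Finset.univ.filter (fun v : ZMod σ × Fin τ => v.1 = ω)).card = τ := by
    intro ω
    have h1 : Finset.univ.filter (fun v : ZMod σ × Fin τ => v.1 = ω)
        = {ω} ×ˢ Finset.univ := by
      ext ⟨x, y⟩
      simp [Finset.mem_product, eq_comm]
    rw [h1, Finset.card_product]
    simp
  have hsc : ∀ ω, s ω + c ω = τ := by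
    intro ω
    have h1 : S.filter (fun v => v.1 = ω)
        = (Finset.univ.filter (fun v : ZMod σ × Fin τ => v.1 = ω)).filter
            (fun v => v ∈ S) := by
      ext v; simp [and_comm]
    have h2 : (Finset.univ \ S).filter (fun v => v.1 = ω)
        = (Finset.univ.filter (fun v : ZMod σ × Fin τ => v.1 = ω)).filter
            (fun v => ¬ v ∈ S) := by
      ext v; simp [and_comm]
    rw [hsdef, hcdef, h1, h2, Finset.card_filter_add_card_filter_not,
      hlayercard]
  have hscQ : ∀ ω, (c ω : ℚ) = τ - s ω := by
    intro ω
    have := hsc ω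
    have : ((s ω : ℚ)) + c ω = τ := by exact_mod_cast congrArg (Nat.cast : ℕ → ℚ) this
    linarith
  have hsQ : ∀ ω, (0 : ℚ) ≤ s ω := fun ω => by positivity
  have hcQ : ∀ ω, (0 : ℚ) ≤ c ω := fun ω => by positivity
  -- |S| fiberwise
  have hScard : S.card = ∑ ω : ZMod σ, s ω :=
    Finset.card_eq_sum_card_fiberwise (f := fun v : ZMod σ × Fin τ => v.1) (fun v _ => Finset.mem_univ _)
  -- edge count decomposition
  have hedge : (Finset.univ.filter (fun p : (ZMod σ × Fin τ) × (ZMod σ × Fin τ) =>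
        (p.2.1 = p.1.1 + 1 ∨ p.1.1 = p.2.1 + 1) ∧ p.1 ∈ S ∧ p.2 ∉ S)).card
      = ∑ ω : ZMod σ, (s ω * c (ω + 1) + s (ω + 1) * c ω) := by
    have hsplit : Finset.univ.filter (fun p : (ZMod σ × Fin τ) × (ZMod σ × Fin τ) =>
        (p.2.1 = p.1.1 + 1 ∨ p.1.1 = p.2.1 + 1) ∧ p.1 ∈ S ∧ p.2 ∉ S)
        = Finset.univ.filter (fun p : (ZMod σ × Fin τ) × (ZMod σ × Fin τ) =>
            p.2.1 = p.1.1 + 1 ∧ p.1 ∈ S ∧ p.2 ∉ S)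
          ∪ Finset.univ.filter (fun p : (ZMod σ × Fin τ) × (ZMod σ × Fin τ) =>
            p.1.1 = p.2.1 + 1 ∧ p.1 ∈ S ∧ p.2 ∉ S) := by
      ext p; simp only [Finset.mem_filter, Finset.mem_union, Finset.mem_univ, true_and]
      tauto
    have hdisj : Disjoint
        (Finset.univ.filter (fun p : (ZMod σ × Fin τ) × (ZMod σ × Fin τ) =>
            p.2.1 = p.1.1 + 1 ∧ p.1 ∈ S ∧ p.2 ∉ S))
        (Finset.univ.filter (fun p : (ZMod σ × Fin τ) × (ZMod σ × Fin τ) =>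
            p.1.1 = p.2.1 + 1 ∧ p.1 ∈ S ∧ p.2 ∉ S)) := by
      rw [Finset.disjoint_left]
      intro p hp1 hp2
      simp only [Finset.mem_filter, Finset.mem_univ, true_and] at hp1 hp2
      have h2 : p.1.1 = p.1.1 + 1 + 1 := by rw [← hp1.1, hp2.1]
      have h0 : ((2 : ℕ) : ZMod σ) = 0 := by
        have := h2
        push_cast
        linear_combination -h2
      rw [ZMod.natCast_eq_zero_iff] at h0
      have := Nat.le_of_dvd (by norm_num) h0
      omega
    have h1 : (Finset.univ.filter (fun p : (ZMod σ × Fin τ) × (ZMod σ × Fin τ) =>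
        p.2.1 = p.1.1 + 1 ∧ p.1 ∈ S ∧ p.2 ∉ S)).card
        = ∑ ω : ZMod σ, s ω * c (ω + 1) := by
      rw [Finset.card_eq_sum_card_fiberwise
        (f := fun p : (ZMod σ × Fin τ) × (ZMod σ × Fin τ) => p.1.1)
        (t := Finset.univ) (fun x _ => Finset.mem_univ _)]
      refine Finset.sum_congr rfl fun ω _ => ?_
      have hfib : (Finset.univ.filter (fun p : (ZMod σ × Fin τ) × (ZMod σ × Fin τ) =>
          p.2.1 = p.1.1 + 1 ∧ p.1 ∈ S ∧ p.2 ∉ S)).filter (fun p => p.1.1 = ω)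
          = (S.filter (fun v => v.1 = ω)) ×ˢ
            ((Finset.univ \ S).filter (fun v => v.1 = ω + 1)) := by
        ext ⟨u, w⟩
        simp only [Finset.mem_filter, Finset.mem_univ, true_and, Finset.mem_product,
          Finset.mem_sdiff]
        constructor
        · rintro ⟨⟨h2, hu, hw⟩, h1⟩
          exact ⟨⟨hu, h1⟩, hw, by rw [h2, h1]⟩
        · rintro ⟨⟨hu, h1⟩, hw, h2⟩
          exact ⟨⟨by rw [h2, h1], hu, hw⟩, h1⟩
      rw [hfib, Finset.card_product, hsdef, hcdef]
    have h2 : (Finset.univ.filter (fun p : (ZMod σ × Fin τ) × (ZMod σ × Fin τ) =>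
        p.1.1 = p.2.1 + 1 ∧ p.1 ∈ S ∧ p.2 ∉ S)).card
        = ∑ ω : ZMod σ, s (ω + 1) * c ω := by
      rw [Finset.card_eq_sum_card_fiberwise
        (f := fun p : (ZMod σ × Fin τ) × (ZMod σ × Fin τ) => p.2.1)
        (t := Finset.univ) (fun x _ => Finset.mem_univ _)]
      refine Finset.sum_congr rfl fun ω _ => ?_
      have hfib : (Finset.univ.filter (fun p : (ZMod σ × Fin τ) × (ZMod σ × Fin τ) =>
          p.1.1 = p.2.1 + 1 ∧ p.1 ∈ S ∧ p.2 ∉ S)).filter (fun p => p.2.1 = ω)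
          = (S.filter (fun v => v.1 = ω + 1)) ×ˢ
            ((Finset.univ \ S).filter (fun v => v.1 = ω)) := by
        ext ⟨u, w⟩
        simp only [Finset.mem_filter, Finset.mem_univ, true_and, Finset.mem_product,
          Finset.mem_sdiff]
        constructor
        · rintro ⟨⟨h2, hu, hw⟩, h1⟩
          exact ⟨⟨hu, by rw [h2, h1]⟩, hw, h1⟩
        · rintro ⟨⟨hu, h1⟩, hw, h2⟩
          exact ⟨⟨by rw [h2, h1], hu, hw⟩, h2⟩
      rw [hfib, Finset.card_product, hsdef, hcdef]
    rw [hsplit, Finset.card_union_of_disjoint hdisj, h1, h2, ← Finset.sum_add_distrib]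
  -- rational form of the edge count
  have hre : ∑ ω : ZMod σ, ((s (ω + 1) : ℚ) * c (ω + 1)) = ∑ ω : ZMod σ, (s ω : ℚ) * c ω :=
    Fintype.sum_equiv (Equiv.addRight 1) _ _ (fun ω => rfl)
  have hEQ : ((Finset.univ.filter (fun p : (ZMod σ × Fin τ) × (ZMod σ × Fin τ) =>
        (p.2.1 = p.1.1 + 1 ∨ p.1.1 = p.2.1 + 1) ∧ p.1 ∈ S ∧ p.2 ∉ S)).card : ℚ)
      = (∑ ω : ZMod σ, 2 * (s ω : ℚ) * c ω)
        + ∑ ω : ZMod σ, ((s ω : ℚ) - s (ω + 1))^2 := by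
    rw [hedge]
    push_cast
    have hterm : ∀ ω : ZMod σ, (s ω : ℚ) * c (ω + 1) + (s (ω + 1) : ℚ) * c ω
        = (s ω : ℚ) * c ω + (s (ω + 1) : ℚ) * c (ω + 1) + ((s ω : ℚ) - s (ω + 1))^2 := by
      intro ω
      rw [hscQ ω, hscQ (ω + 1)]
      ring
    calc ∑ ω : ZMod σ, ((s ω : ℚ) * c (ω + 1) + (s (ω + 1) : ℚ) * c ω)
        = ∑ ω : ZMod σ, ((s ω : ℚ) * c ω + (s (ω + 1) : ℚ) * c (ω + 1)
            + ((s ω : ℚ) - s (ω + 1))^2) := Finset.sum_congr rfl (fun ω _ => hterm ω)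
      _ = (∑ ω : ZMod σ, (s ω : ℚ) * c ω) + (∑ ω : ZMod σ, (s (ω + 1) : ℚ) * c (ω + 1))
            + ∑ ω : ZMod σ, ((s ω : ℚ) - s (ω + 1))^2 := by
          rw [Finset.sum_add_distrib, Finset.sum_add_distrib]
      _ = (∑ ω : ZMod σ, 2 * (s ω : ℚ) * c ω) + ∑ ω : ZMod σ, ((s ω : ℚ) - s (ω + 1))^2 := by
          rw [hre, ← Finset.sum_add_distrib]
          congr 1
          refine Finset.sum_congr rfl fun ω _ => by ring
  -- fastener bound
  have hFS : ∑ ω ∈ Finset.univ.filter (fun ω : ZMod σ => s ω = 0), φ ω ≤ (F \ S).card := by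
    have hsub : F.filter (fun v => s v.1 = 0) ⊆ F \ S := by
      intro v hv
      rw [Finset.mem_filter] at hv
      rw [Finset.mem_sdiff]
      refine ⟨hv.1, fun hvS => ?_⟩
      have : v ∈ S.filter (fun w => w.1 = v.1) := by
        rw [Finset.mem_filter]; exact ⟨hvS, rfl⟩
      have hpos : 0 < s v.1 := by
        rw [hsdef]; exact Finset.card_pos.2 ⟨v, this⟩
      omega
    have hcard : (F.filter (fun v => s v.1 = 0)).card
        = ∑ ω ∈ Finset.univ.filter (fun ω : ZMod σ => s ω = 0),
            ((F.filter (fun v => s v.1 = 0)).filter (fun v => v.1 = ω)).card := by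
      refine Finset.card_eq_sum_card_fiberwise (f := fun v : ZMod σ × Fin τ => v.1) fun v hv => ?_
      rw [Finset.mem_coe, Finset.mem_filter] at hv ⊢
      exact ⟨Finset.mem_univ _, hv.2⟩
    have heq : ∀ ω ∈ Finset.univ.filter (fun ω : ZMod σ => s ω = 0),
        ((F.filter (fun v => s v.1 = 0)).filter (fun v => v.1 = ω)).card = φ ω := by
      intro ω hω
      rw [Finset.mem_filter] at hω
      rw [hφdef]
      congr 1
      ext v
      simp only [Finset.mem_filter]
      constructor
      · rintro ⟨⟨hvF, -⟩, hv1⟩; exact ⟨hvF, hv1⟩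
      · rintro ⟨hvF, hv1⟩; exact ⟨⟨hvF, by rw [hv1]; exact hω.2⟩, hv1⟩
    calc ∑ ω ∈ Finset.univ.filter (fun ω : ZMod σ => s ω = 0), φ ω
        = (F.filter (fun v => s v.1 = 0)).card := by
          rw [hcard]; exact (Finset.sum_congr rfl heq).symm
      _ ≤ (F \ S).card := Finset.card_le_card hsub
  -- fastener layer counts via fractional parts
  have hφg : ∀ ω : ZMod σ, (φ ω : ℚ) = a * τ + g ω - g (ω + 1) := by
    intro ω
    have hv := ZMod.val_lt ω
    have h1 := hlayer ⟨ω.val, hv⟩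
    have hcast1 : ((⟨ω.val, hv⟩ : Fin σ) : ZMod σ) = ω := by
      simp [ZMod.natCast_val, ZMod.cast_id]
    have hcast2 : ((⟨ω.val, hv⟩ : Fin σ) : ℚ) = (ω.val : ℚ) := by norm_cast
    rw [hcast1, hcast2] at h1
    have h1Q : (φ ω : ℚ) = (⌊a * ((ω.val : ℚ) + 1) * τ⌋ : ℚ) - (⌊a * (ω.val : ℚ) * τ⌋ : ℚ) := by
      rw [hφdef]
      exact_mod_cast congrArg (Int.cast : ℤ → ℚ) h1
    have hgω : g ω = a * ω.val * τ - ⌊a * ω.val * τ⌋ := by rw [hgdef]; rfl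
    have hval1 : (ω + 1 : ZMod σ).val = (ω.val + 1) % σ := by
      rw [ZMod.val_add, ZMod.val_one]
    rcases Nat.lt_or_ge (ω.val + 1) σ with h | h
    · have hval : (ω + 1 : ZMod σ).val = ω.val + 1 := by rw [hval1, Nat.mod_eq_of_lt h]
      have hgω1 : g (ω + 1) = a * ((ω.val : ℚ) + 1) * τ - ⌊a * ((ω.val : ℚ) + 1) * τ⌋ := by
        rw [hgdef, hval]
        push_cast
        rfl
      rw [h1Q, hgω, hgω1]
      ring
    · have hv1 : ω.val + 1 = σ := by omega
      have hval : (ω + 1 : ZMod σ).val = 0 := by rw [hval1, hv1, Nat.mod_self]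
      have hgω1 : g (ω + 1) = 0 := by
        rw [hgdef, hval]
        norm_num
      have hσQ : ((ω.val : ℚ) + 1) = σ := by exact_mod_cast congrArg (Nat.cast : ℕ → ℚ) hv1
      have hfl : (⌊a * ((ω.val : ℚ) + 1) * τ⌋ : ℚ) = a * ((ω.val : ℚ) + 1) * τ := by
        rw [hσQ, heven]
        rw [show (2 : ℚ) * (m : ℚ) = ((2 * m : ℤ) : ℚ) by push_cast; ring]
        rw [Int.floor_intCast]
      rw [h1Q, hgω, hgω1, hfl]
      ring
  have hg01 : ∀ z : ZMod σ, 0 ≤ g z ∧ g z ≤ 1 := fun z =>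
    ⟨Int.fract_nonneg _, le_of_lt (Int.fract_lt_one _)⟩
  -- transition sets
  have hT12 : (Finset.univ.filter (fun ω : ZMod σ => s ω = 0 ∧ ¬ s (ω + 1) = 0)).card
      = (Finset.univ.filter (fun ω : ZMod σ => s (ω + 1) = 0 ∧ ¬ s ω = 0)).card := by
    have hshift : (Finset.univ.filter (fun ω : ZMod σ => s (ω + 1) = 0)).card
        = (Finset.univ.filter (fun ω : ZMod σ => s ω = 0)).card := by
      refine Finset.card_nbij' (fun ω => ω + 1) (fun ω => ω - 1) ?_ ?_ ?_ ?_
      · intro ω hω; rw [Finset.mem_coe, Finset.mem_filter] at hω ⊢; exact ⟨Finset.mem_univ _, hω.2⟩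
      · intro ω hω; rw [Finset.mem_coe, Finset.mem_filter] at hω ⊢
        refine ⟨Finset.mem_univ _, ?_⟩; rw [sub_add_cancel]; exact hω.2
      · intro ω _; ring
      · intro ω _; ring
    have e1 := Finset.card_filter_add_card_filter_not
      (s := Finset.univ.filter (fun ω : ZMod σ => s ω = 0))
      (p := fun ω : ZMod σ => s (ω + 1) = 0)
    have e2 := Finset.card_filter_add_card_filter_not
      (s := Finset.univ.filter (fun ω : ZMod σ => s (ω + 1) = 0))
      (p := fun ω : ZMod σ => s ω = 0)
    rw [Finset.filter_filter, Finset.filter_filter] at e1 e2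
    have hcomm : Finset.univ.filter (fun ω : ZMod σ => s ω = 0 ∧ s (ω + 1) = 0)
        = Finset.univ.filter (fun ω : ZMod σ => s (ω + 1) = 0 ∧ s ω = 0) := by
      ext ω; simp [and_comm]
    rw [hcomm] at e1
    omega
  -- boundary bound for fractional parts
  have hgbound : ∑ ω ∈ Finset.univ.filter (fun ω : ZMod σ => s ω = 0), (g (ω + 1) - g ω)
      ≤ ((Finset.univ.filter (fun ω : ZMod σ => s ω = 0 ∧ ¬ s (ω + 1) = 0)).card : ℚ) := by
    rw [Finset.sum_sub_distrib]
    have e1 : ∑ ω ∈ Finset.univ.filter (fun ω : ZMod σ => s ω = 0), g (ω + 1)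
        = ∑ ω ∈ Finset.univ.filter (fun ω : ZMod σ => s ω = 0 ∧ s (ω + 1) = 0), g (ω + 1)
          + ∑ ω ∈ Finset.univ.filter (fun ω : ZMod σ => s ω = 0 ∧ ¬ s (ω + 1) = 0),
              g (ω + 1) := by
      rw [← Finset.filter_filter, ← Finset.filter_filter,
        Finset.sum_filter_add_sum_filter_not]
    have e2 : ∑ ω ∈ Finset.univ.filter (fun ω : ZMod σ => s ω = 0), g ω
        = ∑ ω ∈ Finset.univ.filter (fun ω : ZMod σ => s ω = 0 ∧ s (ω - 1) = 0), g ω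
          + ∑ ω ∈ Finset.univ.filter (fun ω : ZMod σ => s ω = 0 ∧ ¬ s (ω - 1) = 0), g ω := by
      rw [← Finset.filter_filter, ← Finset.filter_filter,
        Finset.sum_filter_add_sum_filter_not]
    have e3 : ∑ ω ∈ Finset.univ.filter (fun ω : ZMod σ => s ω = 0 ∧ s (ω + 1) = 0), g (ω + 1)
        = ∑ ω ∈ Finset.univ.filter (fun ω : ZMod σ => s ω = 0 ∧ s (ω - 1) = 0), g ω := by
      refine Finset.sum_nbij' (fun ω => ω + 1) (fun ω => ω - 1) ?_ ?_ ?_ ?_ ?_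
      · intro ω hω; rw [Finset.mem_filter] at hω ⊢
        refine ⟨Finset.mem_univ _, hω.2.2, ?_⟩
        rw [add_sub_cancel_right]; exact hω.2.1
      · intro ω hω; rw [Finset.mem_filter] at hω ⊢
        refine ⟨Finset.mem_univ _, hω.2.2, ?_⟩
        rw [sub_add_cancel]; exact hω.2.1
      · intro ω _; show ω + 1 - 1 = ω; ring
      · intro ω _; show ω - 1 + 1 = ω; ring
      · intro ω _; rfl
    have e4 : ∑ ω ∈ Finset.univ.filter (fun ω : ZMod σ => s ω = 0 ∧ ¬ s (ω + 1) = 0), g (ω + 1)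
        ≤ ((Finset.univ.filter (fun ω : ZMod σ => s ω = 0 ∧ ¬ s (ω + 1) = 0)).card : ℚ) := by
      have := Finset.sum_le_card_nsmul
        (Finset.univ.filter (fun ω : ZMod σ => s ω = 0 ∧ ¬ s (ω + 1) = 0))
        (fun ω => g (ω + 1)) 1 (fun ω _ => (hg01 (ω + 1)).2)
      simpa using this
    have e5 : (0 : ℚ) ≤ ∑ ω ∈ Finset.univ.filter
        (fun ω : ZMod σ => s ω = 0 ∧ ¬ s (ω - 1) = 0), g ω :=
      Finset.sum_nonneg fun ω _ => (hg01 ω).1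
    rw [e1, e2, e3]
    linarith
  -- squared differences dominate transitions
  have hΔB : ((Finset.univ.filter (fun ω : ZMod σ => s ω = 0 ∧ ¬ s (ω + 1) = 0)).card : ℚ)
      + ((Finset.univ.filter (fun ω : ZMod σ => s (ω + 1) = 0 ∧ ¬ s ω = 0)).card : ℚ)
      ≤ ∑ ω : ZMod σ, ((s ω : ℚ) - s (ω + 1))^2 := by
    have hdisj : Disjoint
        (Finset.univ.filter (fun ω : ZMod σ => s ω = 0 ∧ ¬ s (ω + 1) = 0))
        (Finset.univ.filter (fun ω : ZMod σ => s (ω + 1) = 0 ∧ ¬ s ω = 0)) := by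
      rw [Finset.disjoint_left]
      intro ω h1 h2
      rw [Finset.mem_filter] at h1 h2
      exact h2.2.2 h1.2.1
    have hone : ∀ ω ∈ (Finset.univ.filter (fun ω : ZMod σ => s ω = 0 ∧ ¬ s (ω + 1) = 0))
        ∪ (Finset.univ.filter (fun ω : ZMod σ => s (ω + 1) = 0 ∧ ¬ s ω = 0)),
        (1 : ℚ) ≤ ((s ω : ℚ) - s (ω + 1))^2 := by
      intro ω hω
      rw [Finset.mem_union, Finset.mem_filter, Finset.mem_filter] at hω
      rcases hω with h | h
      · have h0 : s ω = 0 := h.2.1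
        have h1 : 1 ≤ s (ω + 1) := Nat.one_le_iff_ne_zero.2 h.2.2
        have h1Q : (1 : ℚ) ≤ (s (ω + 1) : ℚ) := by exact_mod_cast h1
        rw [h0]
        push_cast
        nlinarith
      · have h0 : s (ω + 1) = 0 := h.2.1
        have h1 : 1 ≤ s ω := Nat.one_le_iff_ne_zero.2 h.2.2
        have h1Q : (1 : ℚ) ≤ (s ω : ℚ) := by exact_mod_cast h1
        rw [h0]
        push_cast
        nlinarith
    have hb1 := Finset.card_nsmul_le_sum
      ((Finset.univ.filter (fun ω : ZMod σ => s ω = 0 ∧ ¬ s (ω + 1) = 0))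
        ∪ (Finset.univ.filter (fun ω : ZMod σ => s (ω + 1) = 0 ∧ ¬ s ω = 0)))
      (fun ω => ((s ω : ℚ) - s (ω + 1))^2) 1 hone
    rw [Finset.card_union_of_disjoint hdisj] at hb1
    have hb2 : ∑ ω ∈ (Finset.univ.filter (fun ω : ZMod σ => s ω = 0 ∧ ¬ s (ω + 1) = 0))
        ∪ (Finset.univ.filter (fun ω : ZMod σ => s (ω + 1) = 0 ∧ ¬ s ω = 0)),
          ((s ω : ℚ) - s (ω + 1))^2 ≤ ∑ ω : ZMod σ, ((s ω : ℚ) - s (ω + 1))^2 :=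
      Finset.sum_le_sum_of_subset_of_nonneg (Finset.subset_univ _)
        (fun ω _ _ => sq_nonneg _)
    have hb3 : (((Finset.univ.filter (fun ω : ZMod σ => s ω = 0 ∧ ¬ s (ω + 1) = 0)).card
        + (Finset.univ.filter (fun ω : ZMod σ => s (ω + 1) = 0 ∧ ¬ s ω = 0)).card) • (1 : ℚ))
        = ((Finset.univ.filter (fun ω : ZMod σ => s ω = 0 ∧ ¬ s (ω + 1) = 0)).card : ℚ)
          + ((Finset.univ.filter (fun ω : ZMod σ => s (ω + 1) = 0 ∧ ¬ s ω = 0)).card : ℚ) := by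
      push_cast
      rw [nsmul_eq_mul]
      push_cast
      ring
    rw [hb3] at hb1
    linarith
  -- assemble
  have hστ : (σ : ℚ) * τ = ∑ _ω : ZMod σ, (τ : ℚ) := by
    rw [Finset.sum_const, Finset.card_univ, ZMod.card, nsmul_eq_mul]
  have hSQ : (S.card : ℚ) = ∑ ω : ZMod σ, (s ω : ℚ) := by
    exact_mod_cast congrArg (Nat.cast : ℕ → ℚ) hScard
  have hlhs : 2 * a * ((σ * τ : ℚ) - S.card) = ∑ ω : ZMod σ, 2 * a * (c ω : ℚ) := by
    rw [hSQ, hστ]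
    rw [← Finset.sum_sub_distrib, Finset.mul_sum]
    refine Finset.sum_congr rfl fun ω _ => ?_
    rw [hscQ]
  -- split Σ 2ac over Z and its complement
  have hsplitZ : ∑ ω : ZMod σ, 2 * a * (c ω : ℚ)
      = ∑ ω ∈ Finset.univ.filter (fun ω : ZMod σ => s ω = 0), 2 * a * (c ω : ℚ)
        + ∑ ω ∈ Finset.univ.filter (fun ω : ZMod σ => ¬ s ω = 0), 2 * a * (c ω : ℚ) :=
    (Finset.sum_filter_add_sum_filter_not _ _ _).symm
  have hZ1 : ∑ ω ∈ Finset.univ.filter (fun ω : ZMod σ => s ω = 0), 2 * a * (c ω : ℚ)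
      ≤ 2 * ((F \ S).card : ℚ) + ∑ ω : ZMod σ, ((s ω : ℚ) - s (ω + 1))^2 := by
    have e1 : ∀ ω ∈ Finset.univ.filter (fun ω : ZMod σ => s ω = 0),
        2 * a * (c ω : ℚ) = 2 * (φ ω : ℚ) + 2 * (g (ω + 1) - g ω) := by
      intro ω hω
      rw [Finset.mem_filter] at hω
      have hc : (c ω : ℚ) = τ := by rw [hscQ, hω.2]; push_cast; ring
      rw [hc, hφg ω]
      ring
    rw [Finset.sum_congr rfl e1, Finset.sum_add_distrib, ← Finset.mul_sum, ← Finset.mul_sum]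
    have hφsum : (∑ ω ∈ Finset.univ.filter (fun ω : ZMod σ => s ω = 0), (φ ω : ℚ))
        ≤ ((F \ S).card : ℚ) := by
      have := hFS
      calc (∑ ω ∈ Finset.univ.filter (fun ω : ZMod σ => s ω = 0), (φ ω : ℚ))
          = ((∑ ω ∈ Finset.univ.filter (fun ω : ZMod σ => s ω = 0), φ ω : ℕ) : ℚ) :=
            (Nat.cast_sum _ _).symm
        _ ≤ ((F \ S).card : ℚ) := by exact_mod_cast hFS
    have := hgbound
    have := hT12
    have := hΔB
    nlinarith [hgbound, hΔB,
      (by exact_mod_cast congrArg (Nat.cast : ℕ → ℚ) hT12 :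
        ((Finset.univ.filter (fun ω : ZMod σ => s ω = 0 ∧ ¬ s (ω + 1) = 0)).card : ℚ)
        = ((Finset.univ.filter (fun ω : ZMod σ => s (ω + 1) = 0 ∧ ¬ s ω = 0)).card : ℚ))]
  have hZ2 : ∑ ω ∈ Finset.univ.filter (fun ω : ZMod σ => ¬ s ω = 0), 2 * a * (c ω : ℚ)
      ≤ ∑ ω : ZMod σ, 2 * (s ω : ℚ) * c ω := by
    have step : ∑ ω ∈ Finset.univ.filter (fun ω : ZMod σ => ¬ s ω = 0), 2 * a * (c ω : ℚ)
        ≤ ∑ ω ∈ Finset.univ.filter (fun ω : ZMod σ => ¬ s ω = 0), 2 * (s ω : ℚ) * c ω := by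
      refine Finset.sum_le_sum fun ω hω => ?_
      rw [Finset.mem_filter] at hω
      have h1 : (1 : ℚ) ≤ (s ω : ℚ) := by
        exact_mod_cast Nat.one_le_iff_ne_zero.2 hω.2
      have h2 := hcQ ω
      nlinarith
    refine le_trans step (Finset.sum_le_sum_of_subset_of_nonneg (Finset.subset_univ _)
      (fun ω _ _ => ?_))
    have := hsQ ω
    have := hcQ ω
    positivity
  rw [hEQ, hlhs, hsplitZ]
  linarith
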